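/- Let φ be a probability density on [0,1) satisfying φ(x) ~ c_φ(1-x)^β as x→1⁻ with c_φ > 0 and 0 < β < 1, and let σ² > 0. Define f(y) = (σ²/(2π)) ∫₀¹ φ(x)/((1-x)² + 4x sin²(y/2)) dx for y ∈ (0,π]. Then lim_{y→0⁺} y^{1-β} f(y) = c_f, where c_f = (σ² c_φ/(2π)) ∫₀^∞ w^β/(w²+1) dw. -/

import Mathlib

open MeasureTheory Filter Topology

open Set

section AR1aux

lemma intOn_rpow_div (β : ℝ) (hβ0 : 0 < β) (hβ1 : β < 1) :
    IntegrableOn (fun w : ℝ => w ^ β / (w ^ 2 + 1)) (Ioi 0) := by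
  have h1 : IntegrableOn (fun w : ℝ => w ^ β / (w ^ 2 + 1)) (Ioc 0 1) := by
    have : IntegrableOn (fun _ : ℝ => (1:ℝ)) (Ioc 0 1) := (integrableOn_const_iff).2 (Or.inr measure_Ioc_lt_top)
    refine this.mono' ?_ ?_
    · apply Measurable.aestronglyMeasurable
      exact (Measurable.div ((measurable_id.pow_const _)) ((measurable_id.pow_const 2).add measurable_const) : Measurable fun w : ℝ => w ^ β / (w ^ 2 + 1))
    · filter_upwards [ae_restrict_mem measurableSet_Ioc] with w hw
      have hw0 : 0 < w := hw.1
      have hnum : w ^ β ≤ 1 := Real.rpow_le_one hw0.le hw.2 hβ0.le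
      have hden : (1:ℝ) ≤ w ^ 2 + 1 := by nlinarith [sq_nonneg w]
      rw [Real.norm_eq_abs, abs_of_nonneg (by positivity)]
      calc w ^ β / (w ^ 2 + 1) ≤ w ^ β / 1 := by
            apply div_le_div_of_nonneg_left (by positivity) (by norm_num) hden
        _ ≤ (1:ℝ) := by simpa using hnum
  have h2 : IntegrableOn (fun w : ℝ => w ^ β / (w ^ 2 + 1)) (Ioi 1) := by
    have hbase : IntegrableOn (fun w : ℝ => w ^ (β - 2)) (Ioi 1) :=
      integrableOn_Ioi_rpow_of_lt (by linarith) one_pos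
    refine hbase.mono' ?_ ?_
    · apply Measurable.aestronglyMeasurable
      exact (Measurable.div ((measurable_id.pow_const _)) ((measurable_id.pow_const 2).add measurable_const) : Measurable fun w : ℝ => w ^ β / (w ^ 2 + 1))
    · filter_upwards [ae_restrict_mem measurableSet_Ioi] with w hw
      have hw0 : (0:ℝ) < w := lt_trans one_pos hw
      rw [Real.norm_eq_abs, abs_of_nonneg (by positivity)]
      have : w ^ (β - 2) = w ^ β / w ^ 2 := by
        rw [Real.rpow_sub hw0, Real.rpow_two]
      rw [this]
      exact div_le_div_of_nonneg_left (by positivity) (by positivity) (by nlinarith)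
  have : IntegrableOn (fun w : ℝ => w ^ β / (w ^ 2 + 1)) (Ioc 0 1 ∪ Ioi 1) := h1.union h2
  refine this.mono_set ?_
  rw [Set.Ioc_union_Ioi_eq_Ioi (by norm_num)]

lemma AR1aux_delta_lemma (φ : ℝ → ℝ) (cφ β : ℝ) (hc : 0 < cφ)
    (hasymp : Filter.Tendsto (fun x => φ x / (cφ * (1 - x) ^ β)) (𝓝[<] (1:ℝ)) (𝓝 1)) :
      ∃ δ : ℝ, 0 < δ ∧ δ ≤ 1/2 ∧ ∀ x : ℝ, 1 - δ ≤ x → x < 1 → φ x ≤ 2 * cφ * (1 - x) ^ β := by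
  have h2 : ∀ᶠ x in 𝓝[<] (1:ℝ), φ x / (cφ * (1 - x) ^ β) < 2 :=
    hasymp.eventually_lt_const one_lt_two
  rw [eventually_nhdsWithin_iff, Metric.eventually_nhds_iff] at h2
  obtain ⟨ε, hε, hball⟩ := h2
  refine ⟨min (ε/2) (1/2), by positivity, min_le_right _ _, fun x hx1 hx2 => ?_⟩
  have hxdist : dist x 1 < ε := by
    rw [Real.dist_eq, abs_of_nonpos (by linarith)]
    have := min_le_left (ε/2) (1/2)
    linarith
  have hlt := hball hxdist hx2
  have hpos : 0 < cφ * (1 - x) ^ β := by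
    have : (0:ℝ) < 1 - x := by linarith
    positivity
  have := (div_lt_iff₀ hpos).mp hlt
  linarith [this]

lemma integrand_integrable (φ : ℝ → ℝ) (hmeas : Measurable φ)
    (hnonneg : ∀ x ∈ Set.Ico (0:ℝ) 1, 0 ≤ φ x)
    (hφ : IntegrableOn φ (Set.Ico (0:ℝ) 1)) (s : ℝ) (hs : 0 < s) :
    IntegrableOn (fun x => φ x / ((1 - x) ^ 2 + x * s ^ 2)) (Set.Ico (0:ℝ) 1) := by
  set m : ℝ := min (1/4) (s^2/2) with hm
  have hm0 : 0 < m := by positivity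
  refine ((hφ.div_const m).mono' ?_ ?_)
  · exact (hmeas.div (((measurable_const.sub measurable_id).pow_const 2).add
      (measurable_id.mul_const (s^2)))).aestronglyMeasurable
  · filter_upwards [ae_restrict_mem measurableSet_Ico] with x hx
    have hx0 : (0:ℝ) ≤ x := hx.1
    have hx1 : x < 1 := hx.2
    have hφx : 0 ≤ φ x := hnonneg x hx
    have hD : m ≤ (1 - x) ^ 2 + x * s ^ 2 := by
      rcases le_or_gt x (1/2) with h | h
      · have : (1/4 : ℝ) ≤ (1-x)^2 := by nlinarith
        have : (1/4:ℝ) ≤ (1 - x) ^ 2 + x * s ^ 2 := by nlinarith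
        exact le_trans (min_le_left _ _) this
      · have : (s^2/2 : ℝ) ≤ x * s^2 := by nlinarith [sq_nonneg s]
        have : (s^2/2:ℝ) ≤ (1 - x) ^ 2 + x * s ^ 2 := by nlinarith [sq_nonneg (1-x)]
        exact le_trans (min_le_right _ _) this
    have hDpos : 0 < (1 - x) ^ 2 + x * s ^ 2 := lt_of_lt_of_le hm0 hD
    rw [Real.norm_eq_abs, abs_of_nonneg (by positivity)]
    exact div_le_div_of_nonneg_left hφx hm0 hD |>.trans (le_refl _) |>.trans_eq rfl


lemma AR1aux_cov_lemma (φ : ℝ → ℝ) (β δ s : ℝ) (hβ0 : 0 < β) (hβ1 : β < 1)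
    (hδ0 : 0 < δ) (hδhalf : δ ≤ 1/2) (hs : 0 < s) :
    s ^ (1 - β) * ∫ x in Set.Ico (1-δ) 1, φ x / ((1 - x) ^ 2 + x * s ^ 2)
      = ∫ w : ℝ, (Set.Ioc 0 (δ/s)).indicator
          (fun w => s ^ (-β) * (φ (1 - s*w) / (w^2 + 1 - s*w))) w := by
  have hsne : s ≠ 0 := hs.ne'
  set F : ℝ → ℝ := fun x => φ x / ((1 - x) ^ 2 + x * s ^ 2) with hF
  set G : ℝ → ℝ := (Set.Ico (1-δ) 1).indicator F with hG
  have h1 : ∫ x in Set.Ico (1-δ) 1, F x = ∫ x : ℝ, G x :=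
    (integral_indicator measurableSet_Ico).symm
  have h2 : ∫ w : ℝ, G (1 - s * w) = |(-s)⁻¹| • ∫ x : ℝ, G x := by
    have := MeasureTheory.Measure.integral_comp_mul_left (fun t => G (t + 1)) (-s)
    simp only [integral_add_right_eq_self] at this
    rw [← this]
    congr 1 with w
    ring_nf
  have habs : |(-s)⁻¹| = s⁻¹ := by
    rw [abs_inv, abs_neg, abs_of_pos hs]
  have h3 : ∫ x : ℝ, G x = s * ∫ w : ℝ, G (1 - s * w) := by
    rw [h2, habs, smul_eq_mul, ← mul_assoc, mul_inv_cancel₀ hsne, one_mul]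
  rw [h1, h3, ← mul_assoc, ← integral_const_mul]
  congr 1 with w
  by_cases hw : w ∈ Set.Ioc 0 (δ/s)
  · have hw0 : 0 < w := hw.1
    have hsw : s * w ≤ δ := by
      rw [← le_div_iff₀' hs]; exact hw.2
    have hmem : (1 - s * w) ∈ Set.Ico (1-δ) 1 := by
      constructor
      · linarith
      · nlinarith
    rw [Set.indicator_of_mem hw, hG, Set.indicator_of_mem hmem, hF]
    have hden : (1 - (1 - s*w))^2 + (1 - s*w) * s^2 = s^2 * (w^2 + 1 - s*w) := by ring
    have hDpos : (0:ℝ) < w^2 + 1 - s*w := by nlinarith [sq_nonneg w]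
    have hpow : s ^ (1-β) * s = s^2 * s^(-β) := by
      have e1 : s^(1-β) * s^(1:ℝ) = s^(2:ℝ) * s^(-β) := by
        rw [← Real.rpow_add hs, ← Real.rpow_add hs]; ring_nf
      have e2 : s^(2:ℝ) = s^(2:ℕ) := by
        rw [← Real.rpow_natCast s 2]; norm_num
      rw [Real.rpow_one] at e1
      rw [e2] at e1
      exact e1
    simp only [hden]
    rw [hpow]
    field_simp
  · have hnmem : (1 - s * w) ∉ Set.Ico (1-δ) 1 := by
      intro hmem
      apply hw
      constructor
      · nlinarith [hmem.2]
      · rw [le_div_iff₀ hs]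
        nlinarith [hmem.1]
    rw [Set.indicator_of_notMem hw, hG, Set.indicator_of_notMem hnmem]
    simp

lemma AR1aux_dct_lemma (φ : ℝ → ℝ) (cφ β δ : ℝ) (hc : 0 < cφ) (hβ0 : 0 < β) (hβ1 : β < 1)
    (hmeas : Measurable φ)
    (hnonneg : ∀ x ∈ Set.Ico (0:ℝ) 1, 0 ≤ φ x)
    (hδ0 : 0 < δ) (hδhalf : δ ≤ 1/2)
    (hδbound : ∀ x : ℝ, 1 - δ ≤ x → x < 1 → φ x ≤ 2 * cφ * (1 - x) ^ β)
    (hasymp : Filter.Tendsto (fun x => φ x / (cφ * (1 - x) ^ β)) (𝓝[<] (1:ℝ)) (𝓝 1)) :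
    Tendsto (fun s : ℝ => ∫ w : ℝ, (Set.Ioc 0 (δ/s)).indicator
          (fun w => s ^ (-β) * (φ (1 - s*w) / (w^2 + 1 - s*w))) w)
      (𝓝[>] (0:ℝ)) (𝓝 (∫ w : ℝ, (Set.Ioi (0:ℝ)).indicator
          (fun w => cφ * (w ^ β / (w ^ 2 + 1))) w)) := by
  set bound : ℝ → ℝ := (Set.Ioi (0:ℝ)).indicator (fun w => 4 * cφ * (w ^ β / (w ^ 2 + 1)))
    with hbound_def
  have hboundnn : ∀ w, 0 ≤ bound w :=
    fun w => Set.indicator_nonneg (fun w hw => by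
      have hw' : (0:ℝ) < w := hw
      positivity) w
  apply tendsto_integral_filter_of_dominated_convergence (bound := bound)
  · -- AEStronglyMeasurable
    filter_upwards [self_mem_nhdsWithin] with s hs
    apply Measurable.aestronglyMeasurable
    apply Measurable.indicator _ measurableSet_Ioc
    apply Measurable.const_mul
    apply Measurable.div
    · exact hmeas.comp (measurable_const.sub (measurable_id.const_mul s))
    · exact ((measurable_id.pow_const 2).add measurable_const).sub (measurable_id.const_mul s)
  · -- bound
    filter_upwards [self_mem_nhdsWithin] with s (hs : 0 < s)
    apply Eventually.of_forall
    intro w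
    by_cases hw : w ∈ Set.Ioc 0 (δ/s)
    · rw [Set.indicator_of_mem hw]
      have hw0 : 0 < w := hw.1
      have hsw : s * w ≤ δ := by rw [← le_div_iff₀' hs]; exact hw.2
      have hx1 : 1 - δ ≤ 1 - s*w := by linarith
      have hx2 : 1 - s*w < 1 := by nlinarith
      have hφpos : 0 ≤ φ (1 - s*w) := hnonneg _ ⟨by linarith, hx2⟩
      have hφle : φ (1 - s*w) ≤ 2 * cφ * (s*w) ^ β := by
        have := hδbound _ hx1 hx2
        simpa using this
      have hDpos : (0:ℝ) < w^2 + 1 - s*w := by nlinarith [sq_nonneg w]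
      have hDge : (w^2 + 1)/2 ≤ w^2 + 1 - s*w := by nlinarith [sq_nonneg w]
      have hb : bound w = 4 * cφ * (w ^ β / (w ^ 2 + 1)) :=
        Set.indicator_of_mem hw0 _
      rw [Real.norm_eq_abs, abs_of_nonneg (by positivity), hb]
      have step1 : s ^ (-β) * (φ (1 - s*w) / (w^2 + 1 - s*w))
          ≤ s ^ (-β) * ((2 * cφ * (s*w) ^ β) / ((w^2+1)/2)) := by
        gcongr <;> positivity
      refine step1.trans (le_of_eq ?_)
      have hmulpow : (s*w) ^ β = s ^ β * w ^ β := Real.mul_rpow hs.le hw0.le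
      have hspow : s ^ (-β) * s ^ β = 1 := by
        rw [← Real.rpow_add hs]; norm_num
      have hne : (w^2+1) ≠ (0:ℝ) := by positivity
      rw [hmulpow]
      calc s ^ (-β) * (2 * cφ * (s ^ β * w ^ β) / ((w^2+1)/2))
          = (s ^ (-β) * s ^ β) * (4 * cφ * (w ^ β / (w ^ 2 + 1))) := by
            field_simp; ring
        _ = 4 * cφ * (w ^ β / (w ^ 2 + 1)) := by rw [hspow, one_mul]
    · rw [Set.indicator_of_notMem hw]
      simpa using hboundnn w
  · -- bound integrable
    rw [hbound_def, integrable_indicator_iff measurableSet_Ioi]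
    exact ((intOn_rpow_div β hβ0 hβ1).const_mul _)
  · -- pointwise limit
    apply Eventually.of_forall
    intro w
    by_cases hw0 : 0 < w
    · have hev : ∀ᶠ s in 𝓝[>] (0:ℝ), s ∈ Set.Ioo 0 (δ/w) :=
        Ioo_mem_nhdsGT_of_mem ⟨le_refl 0, by positivity⟩
      have heq : ∀ᶠ s in 𝓝[>] (0:ℝ),
          (Set.Ioc 0 (δ/s)).indicator
            (fun w => s ^ (-β) * (φ (1 - s*w) / (w^2 + 1 - s*w))) w
          = (φ (1 - s*w) / (cφ * (s*w) ^ β)) * (cφ * w ^ β / (w^2 + 1 - s*w)) := by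
        filter_upwards [hev] with s hs
        have hs0 : 0 < s := hs.1
        have hmem : w ∈ Set.Ioc 0 (δ/s) := by
          refine ⟨hw0, ?_⟩
          rw [le_div_iff₀ hs0]
          have := hs.2
          rw [lt_div_iff₀ hw0] at this
          linarith
        rw [Set.indicator_of_mem hmem]
        have hmulpow : (s*w) ^ β = s ^ β * w ^ β := Real.mul_rpow hs0.le hw0.le
        have hwb : (0:ℝ) < w ^ β := Real.rpow_pos_of_pos hw0 β
        have hsb : (0:ℝ) < s ^ β := Real.rpow_pos_of_pos hs0 β
        have hD : (0:ℝ) < w^2 + 1 - s*w := by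
          have h1 : s * w < δ := by
            have := hs.2; rw [lt_div_iff₀ hw0] at this; linarith
          nlinarith [sq_nonneg w]
        rw [hmulpow, Real.rpow_neg hs0.le]
        field_simp
      have hval : (Set.Ioi (0:ℝ)).indicator (fun w => cφ * (w ^ β / (w ^ 2 + 1))) w
          = 1 * (cφ * w ^ β / (w^2 + 1 - 0*w)) := by
        rw [Set.indicator_of_mem (show w ∈ Set.Ioi (0:ℝ) from hw0) _]; ring
      rw [hval]
      apply Tendsto.congr' (EventuallyEq.symm heq)
      apply Tendsto.mul
      · -- ratio tends to 1
        have hcomp : Tendsto (fun s : ℝ => 1 - s*w) (𝓝[>] (0:ℝ)) (𝓝[<] (1:ℝ)) := by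
          rw [tendsto_nhdsWithin_iff]
          constructor
          · have : Tendsto (fun s : ℝ => 1 - s*w) (𝓝 0) (𝓝 1) := by
              have h0 : Tendsto (fun s : ℝ => s * w) (𝓝 0) (𝓝 (0 * w)) :=
                (continuous_id.mul continuous_const).tendsto 0
              simpa using tendsto_const_nhds.sub h0
            exact this.mono_left nhdsWithin_le_nhds
          · filter_upwards [self_mem_nhdsWithin] with s (hs : 0 < s)
            have : 0 < s * w := mul_pos hs hw0
            simp only [Set.mem_Iio]; linarith
        have := hasymp.comp hcomp
        simp only [Function.comp_def, sub_sub_cancel] at this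
        exact this
      · apply Tendsto.div tendsto_const_nhds
        · have h1 : Tendsto (fun s : ℝ => w^2 + 1 - s*w) (𝓝 0) (𝓝 (w^2 + 1 - 0*w)) := by
            apply Tendsto.sub tendsto_const_nhds
            exact (continuous_id.mul continuous_const).tendsto 0
          exact h1.mono_left nhdsWithin_le_nhds
        · simp; positivity
    · -- w ≤ 0
      have h1 : ∀ s : ℝ, (Set.Ioc 0 (δ/s)).indicator
            (fun w => s ^ (-β) * (φ (1 - s*w) / (w^2 + 1 - s*w))) w = 0 := by
        intro s
        apply Set.indicator_of_notMem
        intro hmem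
        exact hw0 hmem.1
      have h2 : (Set.Ioi (0:ℝ)).indicator (fun w => cφ * (w ^ β / (w ^ 2 + 1))) w = 0 :=
        Set.indicator_of_notMem hw0 _
      rw [h2]
      simp only [h1]
      exact tendsto_const_nhds

-- B part
lemma AR1aux_B_lemma (φ : ℝ → ℝ) (β δ : ℝ) (hβ0 : 0 < β) (hβ1 : β < 1) (hδ0 : 0 < δ) (hδ1 : δ ≤ 1/2)
    (hmeas : Measurable φ)
    (hnonneg : ∀ x ∈ Set.Ico (0:ℝ) 1, 0 ≤ φ x)
    (hφ : IntegrableOn φ (Set.Ico (0:ℝ) 1))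
    (hprob : ∫ x in Set.Ico (0:ℝ) 1, φ x = 1) :
    Tendsto (fun s : ℝ => s ^ (1 - β) * ∫ x in Set.Ico (0:ℝ) (1-δ), φ x / ((1 - x) ^ 2 + x * s ^ 2))
      (𝓝[>] (0:ℝ)) (𝓝 0) := by
  have hup : Tendsto (fun s : ℝ => s ^ (1-β) * (1/δ^2)) (𝓝[>] (0:ℝ)) (𝓝 0) := by
    have h1 : Tendsto (fun s : ℝ => s ^ (1-β)) (𝓝 0) (𝓝 ((0:ℝ) ^ (1-β))) :=
      (Real.continuousAt_rpow_const 0 (1-β) (Or.inr (by linarith))).tendsto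
    rw [Real.zero_rpow (by intro h; linarith [h])] at h1
    have h2 : Tendsto (fun s : ℝ => s ^ (1-β)) (𝓝[>] (0:ℝ)) (𝓝 0) :=
      h1.mono_left nhdsWithin_le_nhds
    have h3 := h2.mul_const (1/δ^2)
    rw [zero_mul] at h3; exact h3
  apply squeeze_zero' ?_ ?_ hup
  · filter_upwards [self_mem_nhdsWithin] with s (hs : 0 < s)
    apply mul_nonneg (Real.rpow_nonneg hs.le _)
    apply setIntegral_nonneg measurableSet_Ico
    intro x hx
    have hx' : x ∈ Set.Ico (0:ℝ) 1 := ⟨hx.1, by linarith [hx.2]⟩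
    have hφx := hnonneg x hx'
    exact div_nonneg hφx (by nlinarith [sq_nonneg (1-x), hx.1, sq_nonneg s])
  · filter_upwards [self_mem_nhdsWithin] with s (hs : 0 < s)
    apply mul_le_mul_of_nonneg_left _ (Real.rpow_nonneg hs.le _)
    have hsub : Set.Ico (0:ℝ) (1-δ) ⊆ Set.Ico (0:ℝ) 1 := by
      apply Set.Ico_subset_Ico le_rfl; linarith
    have hint1 : IntegrableOn (fun x => φ x / ((1 - x) ^ 2 + x * s ^ 2)) (Set.Ico (0:ℝ) (1-δ)) :=
      (integrand_integrable φ hmeas hnonneg hφ s hs).mono_set hsub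
    have hint2 : IntegrableOn (fun x => φ x / δ^2) (Set.Ico (0:ℝ) (1-δ)) :=
      (hφ.mono_set hsub).div_const _
    have step1 : ∫ x in Set.Ico (0:ℝ) (1-δ), φ x / ((1 - x) ^ 2 + x * s ^ 2)
        ≤ ∫ x in Set.Ico (0:ℝ) (1-δ), φ x / δ^2 := by
      apply setIntegral_mono_on hint1 hint2 measurableSet_Ico
      intro x hx
      have hφx : 0 ≤ φ x := hnonneg x (hsub hx)
      have hD : δ^2 ≤ (1 - x) ^ 2 + x * s ^ 2 := by
        have h1 : δ ≤ 1 - x := by linarith [hx.2]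
        nlinarith [hx.1, sq_nonneg s]
      exact div_le_div_of_nonneg_left hφx (by positivity) hD
    have step2 : ∫ x in Set.Ico (0:ℝ) (1-δ), φ x / δ^2 ≤ 1/δ^2 := by
      rw [integral_div]
      have hint : ∫ x in Set.Ico (0:ℝ) (1-δ), φ x ≤ 1 := by
        calc ∫ x in Set.Ico (0:ℝ) (1-δ), φ x ≤ ∫ x in Set.Ico (0:ℝ) 1, φ x := by
              apply setIntegral_mono_set hφ
              · filter_upwards [ae_restrict_mem measurableSet_Ico] with x hx
                exact hnonneg x hx
              · exact HasSubset.Subset.eventuallyLE hsub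
          _ = 1 := hprob
      gcongr
    linarith

lemma H_tendsto (φ : ℝ → ℝ) (cφ β : ℝ) (hc : 0 < cφ) (hβ0 : 0 < β) (hβ1 : β < 1)
    (hmeas : Measurable φ)
    (hnonneg : ∀ x ∈ Set.Ico (0:ℝ) 1, 0 ≤ φ x)
    (hprob : ∫ x in Set.Ico (0:ℝ) 1, φ x = 1)
    (hasymp : Filter.Tendsto (fun x => φ x / (cφ * (1 - x) ^ β)) (𝓝[<] (1:ℝ)) (𝓝 1)) :
    Tendsto (fun s : ℝ => s ^ (1 - β) * ∫ x in Set.Ico (0:ℝ) 1, φ x / ((1 - x) ^ 2 + x * s ^ 2))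
      (𝓝[>] (0:ℝ)) (𝓝 (cφ * ∫ w in Set.Ioi (0:ℝ), w ^ β / (w ^ 2 + 1))) := by
  have hφ : IntegrableOn φ (Ico (0:ℝ) 1) := by
    by_contra h
    rw [integral_undef h] at hprob
    norm_num at hprob
  obtain ⟨δ, hδ0, hδhalf, hδbound⟩ := AR1aux_delta_lemma φ cφ β hc hasymp
  have hδ1 : (0:ℝ) ≤ 1 - δ := by linarith
  have hδ2 : (1-δ:ℝ) ≤ 1 := by linarith
  have hval : (∫ w : ℝ, (Set.Ioi (0:ℝ)).indicator (fun w => cφ * (w ^ β / (w ^ 2 + 1))) w)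
      = cφ * ∫ w in Set.Ioi (0:ℝ), w ^ β / (w ^ 2 + 1) := by
    rw [integral_indicator measurableSet_Ioi, integral_const_mul]
  have hA : Tendsto (fun s : ℝ => s ^ (1 - β) * ∫ x in Set.Ico (1-δ) 1,
        φ x / ((1 - x) ^ 2 + x * s ^ 2)) (𝓝[>] (0:ℝ))
      (𝓝 (cφ * ∫ w in Set.Ioi (0:ℝ), w ^ β / (w ^ 2 + 1))) := by
    rw [← hval]
    apply Tendsto.congr' _ (AR1aux_dct_lemma φ cφ β δ hc hβ0 hβ1 hmeas hnonneg hδ0 hδhalf hδbound hasymp)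
    filter_upwards [self_mem_nhdsWithin] with s (hs : 0 < s)
    exact (AR1aux_cov_lemma φ β δ s hβ0 hβ1 hδ0 hδhalf hs).symm
  have hB := AR1aux_B_lemma φ β δ hβ0 hβ1 hδ0 hδhalf hmeas hnonneg hφ hprob
  have hsum := hB.add hA
  rw [zero_add] at hsum
  apply Tendsto.congr' _ hsum
  filter_upwards [self_mem_nhdsWithin] with s (hs : 0 < s)
  have hsplit : ∫ x in Set.Ico (0:ℝ) 1, φ x / ((1 - x) ^ 2 + x * s ^ 2)
      = (∫ x in Set.Ico (0:ℝ) (1-δ), φ x / ((1 - x) ^ 2 + x * s ^ 2))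
        + ∫ x in Set.Ico (1-δ) 1, φ x / ((1 - x) ^ 2 + x * s ^ 2) := by
    rw [← setIntegral_union (Set.Ico_disjoint_Ico_same) measurableSet_Ico
      ((integrand_integrable φ hmeas hnonneg hφ s hs).mono_set
        (Set.Ico_subset_Ico le_rfl hδ2))
      ((integrand_integrable φ hmeas hnonneg hφ s hs).mono_set
        (Set.Ico_subset_Ico hδ1 le_rfl))]
    rw [Set.Ico_union_Ico_eq_Ico hδ1 hδ2]
  rw [hsplit, mul_add]

end AR1aux

/-- Low-frequency power-law behavior of the aggregated AR(1) spectral density: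
if the mixing density satisfies `φ(x) ~ c_φ (1-x)^β` as `x → 1⁻` with `0 < β < 1`, then
`y^{1-β} f(y) → c_f = (σ² c_φ/(2π)) ∫₀^∞ w^β/(w²+1) dw` as `y → 0⁺`, where
`f(y) = (σ²/(2π)) ∫₀¹ φ(x)/((1-x)² + 4x sin²(y/2)) dx`. -/
theorem aggregated_AR1_spectral_density_asymptotics
    (φ : ℝ → ℝ) (cφ β σ2 : ℝ) (hc : 0 < cφ) (hβ0 : 0 < β) (hβ1 : β < 1) (hσ : 0 < σ2)
    (hmeas : Measurable φ)
    (hnonneg : ∀ x ∈ Set.Ico (0:ℝ) 1, 0 ≤ φ x)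
    (hprob : ∫ x in Set.Ico (0:ℝ) 1, φ x = 1)
    (hasymp : Filter.Tendsto (fun x => φ x / (cφ * (1 - x) ^ β)) (𝓝[<] (1:ℝ)) (𝓝 1)) :
    Tendsto (fun y : ℝ =>
        y ^ (1 - β) *
          (σ2 / (2 * Real.pi) *
            ∫ x in Set.Ico (0:ℝ) 1, φ x / ((1 - x) ^ 2 + 4 * x * Real.sin (y / 2) ^ 2)))
      (𝓝[>] (0:ℝ))
      (𝓝 (σ2 * cφ / (2 * Real.pi) * ∫ w in Set.Ioi (0:ℝ), w ^ β / (w ^ 2 + 1))) := by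
  set I := ∫ w in Set.Ioi (0:ℝ), w ^ β / (w ^ 2 + 1) with hI
  have hH := H_tendsto φ cφ β hc hβ0 hβ1 hmeas hnonneg hprob hasymp
  set s : ℝ → ℝ := fun y => 2 * Real.sin (y/2) with hsdef
  -- s tends to 0 within Ioi 0
  have hs_tendsto : Tendsto s (𝓝[>] (0:ℝ)) (𝓝[>] (0:ℝ)) := by
    rw [tendsto_nhdsWithin_iff]
    constructor
    · have hcont : Continuous s := by
        apply continuous_const.mul (Real.continuous_sin.comp (continuous_id.div_const 2))
      have := hcont.tendsto 0
      simp only [hsdef] at this ⊢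
      norm_num at this
      exact this.mono_left nhdsWithin_le_nhds
    · filter_upwards [Ioo_mem_nhdsGT_of_mem (Set.left_mem_Ico.mpr Real.pi_pos)] with y hy
      have h1 : 0 < y/2 := by linarith [hy.1]
      have h2 : y/2 < Real.pi := by linarith [hy.2, Real.pi_pos]
      have := Real.sin_pos_of_pos_of_lt_pi h1 h2
      simp only [hsdef, Set.mem_Ioi]
      linarith
  -- ratio y / (2 sin(y/2)) tends to 1
  have hratio : Tendsto (fun y : ℝ => y / s y) (𝓝[>] (0:ℝ)) (𝓝 1) := by
    have hsin : Tendsto (fun t : ℝ => Real.sin t / t) (𝓝[≠] (0:ℝ)) (𝓝 1) := by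
      have h := hasDerivAt_iff_tendsto_slope.mp (Real.hasDerivAt_sin 0)
      rw [Real.cos_zero] at h
      apply h.congr'
      filter_upwards with t
      simp [slope_def_field]
    have hmap : Tendsto (fun y : ℝ => y/2) (𝓝[>] (0:ℝ)) (𝓝[≠] (0:ℝ)) := by
      rw [tendsto_nhdsWithin_iff]
      constructor
      · have : Tendsto (fun y : ℝ => y/2) (𝓝 0) (𝓝 (0/2)) :=
          (continuous_id.div_const 2).tendsto 0
        norm_num at this
        exact this.mono_left nhdsWithin_le_nhds
      · filter_upwards [self_mem_nhdsWithin] with y (hy : 0 < y)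
        simp only [Set.mem_compl_iff, Set.mem_singleton_iff]
        positivity
    have hcomp := (hsin.comp hmap).inv₀ one_ne_zero
    norm_num at hcomp
    apply hcomp.congr
    intro y
    simp only [hsdef]
    rw [div_div]
  have hratio_pow : Tendsto (fun y : ℝ => (y / s y) ^ (1-β)) (𝓝[>] (0:ℝ)) (𝓝 1) := by
    have := hratio.rpow_const (p := 1-β) (Or.inl one_ne_zero)
    rwa [Real.one_rpow] at this
  have hcomp2 : Tendsto (fun y : ℝ => (s y) ^ (1 - β) *
      ∫ x in Set.Ico (0:ℝ) 1, φ x / ((1 - x) ^ 2 + x * (s y) ^ 2)) (𝓝[>] (0:ℝ))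
      (𝓝 (cφ * I)) := hH.comp hs_tendsto
  have hprod := (hratio_pow.mul hcomp2).const_mul (σ2 / (2 * Real.pi))
  have hlimeq : σ2 * cφ / (2 * Real.pi) * I = σ2 / (2 * Real.pi) * (1 * (cφ * I)) := by ring
  rw [hlimeq]
  apply Tendsto.congr' _ hprod
  filter_upwards [Ioo_mem_nhdsGT_of_mem (Set.left_mem_Ico.mpr Real.pi_pos)] with y hy
  have hy0 : 0 < y := hy.1
  have hsy : 0 < s y := by
    have h1 : 0 < y/2 := by linarith
    have h2 : y/2 < Real.pi := by linarith [hy.2, Real.pi_pos]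
    have := Real.sin_pos_of_pos_of_lt_pi h1 h2
    simp only [hsdef]; linarith
  have hiny : ∀ x : ℝ, φ x / ((1 - x) ^ 2 + 4 * x * Real.sin (y / 2) ^ 2)
      = φ x / ((1 - x) ^ 2 + x * (s y) ^ 2) := by
    intro x
    congr 1
    simp only [hsdef]
    ring
  have hpow : y ^ (1-β) = (y / s y) ^ (1-β) * (s y) ^ (1-β) := by
    rw [← Real.mul_rpow (by positivity) hsy.le, div_mul_cancel₀ _ hsy.ne']
  simp only [hiny]
  rw [hpow]
  ring
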